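/- Let C be a category with finite products and x, u, y, v objects of C. The map sending a pair (get : x ⟶ y, put : x ⨯ v ⟶ u) to the class ⟨prod.lift (𝟙 x) get, put | x⟩ is a bijection from the set (x ⟶ y) × (x ⨯ v ⟶ u) to Lens((x,u),(y,v)). Its inverse is well defined on the quotient and sends the class ⟨α, β | c⟩ to the pair (α ≫ prod.snd, prod.lift (prod.fst ≫ α ≫ prod.fst) prod.snd ≫ β). -/

import Mathlib

open CategoryTheory CategoryTheory.Limits

variable {C : Type*} [Category C] [HasFiniteProducts C]

/-- Representatives of cartesian lenses from `(x,u)` to `(y,v)`. -/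
def LensRep (x u y v : C) : Type _ :=
  Σ c : C, (x ⟶ c ⨯ y) × (c ⨯ v ⟶ u)

/-- The coend relation: for `f : n ⟶ c`, `α : x ⟶ n ⨯ y`, `β : c ⨯ v ⟶ u`,
`(c, α ≫ prod.map f (𝟙 y), β)` is related to `(n, α, prod.map f (𝟙 v) ≫ β)`. -/
def LensRel (x u y v : C) : LensRep x u y v → LensRep x u y v → Prop :=
  fun A B => ∃ f : B.1 ⟶ A.1,
    A.2.1 = B.2.1 ≫ prod.map f (𝟙 y) ∧ B.2.2 = prod.map f (𝟙 v) ≫ A.2.2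

/-- The lens coend `Lens((x,u),(y,v))`. -/
def Lens (x u y v : C) : Type _ := Quot (LensRel x u y v)

/-- The map `(get, put) ↦ ⟨prod.lift (𝟙 x) get, put | x⟩` is a bijection from
`(x ⟶ y) × (x ⨯ v ⟶ u)` to `Lens((x,u),(y,v))`, whose inverse is well defined on the
quotient and sends `⟨α, β | c⟩` to
`(α ≫ prod.snd, prod.lift (prod.fst ≫ α ≫ prod.fst) prod.snd ≫ β)`. -/
theorem lens_get_put_bijection (x u y v : C) :
    ∃ g : Lens x u y v → (x ⟶ y) × (x ⨯ v ⟶ u),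
      (∀ (c : C) (α : x ⟶ c ⨯ y) (β : c ⨯ v ⟶ u),
        g (Quot.mk (LensRel x u y v) ⟨c, α, β⟩) =
          (α ≫ prod.snd, prod.lift (prod.fst ≫ α ≫ prod.fst) prod.snd ≫ β)) ∧
      Function.LeftInverse g
        (fun p : (x ⟶ y) × (x ⨯ v ⟶ u) =>
          Quot.mk (LensRel x u y v) ⟨x, prod.lift (𝟙 x) p.1, p.2⟩) ∧
      Function.RightInverse g
        (fun p : (x ⟶ y) × (x ⨯ v ⟶ u) =>
          Quot.mk (LensRel x u y v) ⟨x, prod.lift (𝟙 x) p.1, p.2⟩) := by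
  refine ⟨Quot.lift (fun A => (A.2.1 ≫ prod.snd,
      prod.lift (prod.fst ≫ A.2.1 ≫ prod.fst) prod.snd ≫ A.2.2)) ?_, fun c α β => rfl, ?_, ?_⟩
  · rintro A B ⟨f, h1, h2⟩
    beta_reduce
    rw [h1, h2]
    refine Prod.ext ?_ ?_
    · simp
    · dsimp
      rw [← Category.assoc (prod.lift (prod.fst ≫ B.2.1 ≫ prod.fst) prod.snd)]
      have : prod.lift (prod.fst ≫ (B.2.1 ≫ prod.map f (𝟙 y)) ≫ prod.fst) prod.snd =
          prod.lift (prod.fst ≫ B.2.1 ≫ prod.fst) prod.snd ≫ prod.map f (𝟙 v) := by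
        apply Limits.prod.hom_ext <;> simp
      rw [this]
  · rintro ⟨g, p⟩
    dsimp
    refine Prod.ext ?_ ?_
    · exact prod.lift_snd _ _
    · dsimp
      have : prod.lift (prod.fst ≫ prod.lift (𝟙 x) g ≫ prod.fst) (prod.snd : x ⨯ v ⟶ v) =
          𝟙 (x ⨯ v) := by
        apply Limits.prod.hom_ext <;> simp [prod.lift_fst, prod.lift_snd]
      rw [this, Category.id_comp]
  · rintro ⟨c, α, β⟩
    dsimp
    refine Eq.symm (Quot.sound ⟨α ≫ prod.fst, ?_, ?_⟩)
    · apply Limits.prod.hom_ext <;> simp [prod.lift_fst, prod.lift_snd]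
    · have : prod.map (α ≫ prod.fst) (𝟙 v) =
          prod.lift (prod.fst ≫ α ≫ prod.fst) (prod.snd : x ⨯ v ⟶ v) := by
        apply Limits.prod.hom_ext <;> simp [prod.lift_fst, prod.lift_snd]
      rw [this]
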